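/- Let n ≥ 2 and let z, w ∈ ℂⁿ satisfy Σ_{m=1}^{n} z_m·w_m = 1. Then there exists an invertible matrix M ∈ GL(n, ℂ) such that, setting z' = M·z and w' = (Mᵀ)⁻¹·w (so that Σ_m z'_m·w'_m = 1 still holds), one has z'_j·w'_j + z'_k·w'_k ≠ 0 for all j, k ∈ {1,…,n}; in particular every z'_j and every w'_j is nonzero. (This is the pointwise linear-algebra content of the paper's Proposition that the condition (★) can be arranged by a linear change of coordinates, using the transformation law z ↦ Mz, w ↦ (Mᵀ)⁻¹w for the projective dual coordinates.) -/

import Mathlib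

theorem star_condition_by_linear_change
    {n : ℕ} (hn : 2 ≤ n) (z w : Fin n → ℂ)
    (hzw : ∑ m, z m * w m = 1) :
    ∃ M : Matrix (Fin n) (Fin n) ℂ, IsUnit M ∧
      (∑ m, (M.mulVec z) m * ((M.transpose)⁻¹.mulVec w) m = 1) ∧
      ∀ j k : Fin n,
        (M.mulVec z) j * ((M.transpose)⁻¹.mulVec w) j
          + (M.mulVec z) k * ((M.transpose)⁻¹.mulVec w) k ≠ 0 := by
  have hn0 : (n : ℂ) ≠ 0 := Nat.cast_ne_zero.mpr (by omega)
  -- w is nonzero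
  have hwne : ∃ i, w i ≠ 0 := by
    by_contra h
    push_neg at h
    simp [h] at hzw
  obtain ⟨i, hwi⟩ := hwne
  set S : ℂ := ∑ j, w j with hS
  set c₀ : ℂ := if S + w i = 0 then 2 else 1 with hc₀
  set u : Fin n → ℂ := fun j => 1 + c₀ * (if j = i then 1 else 0) with hu
  have hu_ne : ∀ j, u j ≠ 0 := by
    intro j
    simp only [hu, hc₀]
    split_ifs <;> norm_num
  have hwu : (∑ j, w j * u j) ≠ 0 := by
    have hsum : (∑ j, w j * u j) = S + c₀ * w i := by
      have hterm : ∀ j, w j * u j = w j + (if j = i then c₀ * w j else 0) := by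
        intro j
        simp only [hu]
        split_ifs <;> ring
      rw [Finset.sum_congr rfl fun j _ => hterm j, Finset.sum_add_distrib,
        Finset.sum_ite_eq']
      simp [hS, mul_comm]
    rw [hsum, hc₀]
    split_ifs with hcase
    · intro h
      apply hwi
      have : S + w i + w i = 0 := by linear_combination h
      rw [hcase] at this
      simpa using this
    · intro h; exact hcase (by linear_combination h)
  set v : Fin n → ℂ := fun j => ((n : ℂ) * u j)⁻¹ with hv
  have huv : ∀ j, u j * v j = (n : ℂ)⁻¹ := by
    intro j
    show u j * ((n : ℂ) * u j)⁻¹ = (n : ℂ)⁻¹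
    rw [mul_inv]
    field_simp [hu_ne j]
  have hsum_uv : (∑ j, u j * v j) = 1 := by
    rw [Finset.sum_congr rfl (fun j _ => huv j)]
    simp only [Finset.sum_const, Finset.card_univ, Fintype.card_fin, nsmul_eq_mul]
    exact mul_inv_cancel₀ hn0
  set c : ℂ := ∑ m, v m * z m with hc
  set M : Matrix (Fin n) (Fin n) ℂ := Matrix.of fun j k =>
    (if j = k then (1 : ℂ) else 0) + (1 + c) * u j * w k - z j * w k - u j * v k with hM
  -- key computation: mulVec
  have hmulVec : ∀ (x : Fin n → ℂ) (j : Fin n), M.mulVec x j =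
      x j + (1 + c) * u j * (∑ k, w k * x k) - z j * (∑ k, w k * x k)
        - u j * (∑ k, v k * x k) := by
    intro x j
    simp only [Matrix.mulVec, dotProduct, hM, Matrix.of_apply]
    rw [Finset.sum_congr rfl (fun k _ => (by split_ifs <;> ring :
      ((if j = k then (1:ℂ) else 0) + (1 + c) * u j * w k - z j * w k - u j * v k) * x k
        = (if j = k then x k else 0) + ((1 + c) * u j) * (w k * x k)
          - z j * (w k * x k) - u j * (v k * x k)))]
    rw [Finset.sum_sub_distrib, Finset.sum_sub_distrib, Finset.sum_add_distrib,
      ← Finset.mul_sum, ← Finset.mul_sum, ← Finset.mul_sum, Finset.sum_ite_eq]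
    simp [mul_assoc]
  -- key computation: vecMul
  have hvecMul : ∀ (x : Fin n → ℂ) (k : Fin n), Matrix.vecMul x M k =
      x k + (1 + c) * (∑ j, u j * x j) * w k - (∑ j, z j * x j) * w k
        - (∑ j, u j * x j) * v k := by
    intro x k
    simp only [Matrix.vecMul, dotProduct, hM, Matrix.of_apply]
    rw [Finset.sum_congr rfl (fun j _ => (by split_ifs <;> ring :
      x j * ((if j = k then (1:ℂ) else 0) + (1 + c) * u j * w k - z j * w k - u j * v k)
        = (if j = k then x j else 0) + (u j * x j) * ((1 + c) * w k)
          - (z j * x j) * w k - (u j * x j) * v k))]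
    rw [Finset.sum_sub_distrib, Finset.sum_sub_distrib, Finset.sum_add_distrib,
      ← Finset.sum_mul, ← Finset.sum_mul, ← Finset.sum_mul, Finset.sum_ite_eq']
    simp; ring
  have hwz1 : (∑ k, w k * z k) = 1 := by
    rw [← hzw]; exact Finset.sum_congr rfl fun k _ => mul_comm _ _
  -- M sends z to u
  have hz' : M.mulVec z = u := by
    funext j
    rw [hmulVec z j, hwz1, ← hc]
    ring
  -- injectivity of mulVec, hence M is a unit
  have hkey : ∀ x : Fin n → ℂ, M.mulVec x = 0 → x = 0 := by
    intro x hx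
    set Wx : ℂ := ∑ k, w k * x k with hWxd
    set Vx : ℂ := ∑ k, v k * x k with hVxd
    have hpt : ∀ j, x j + (1 + c) * u j * Wx - z j * Wx - u j * Vx = 0 := by
      intro j
      rw [← hmulVec x j, hx]
      rfl
    have hx_eq : ∀ j, x j = u j * Vx + z j * Wx - (1 + c) * u j * Wx := by
      intro j
      linear_combination hpt j
    have hWx : Wx = 0 := by
      have h2 : Vx = (∑ j, v j * u j) * Vx + (∑ j, v j * z j) * Wx
          - (∑ j, v j * u j) * ((1 + c) * Wx) := by
        rw [Finset.sum_mul, Finset.sum_mul, Finset.sum_mul,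
          ← Finset.sum_add_distrib, ← Finset.sum_sub_distrib, hVxd]
        exact Finset.sum_congr rfl fun j _ => by rw [hx_eq j]; ring
      have hvu : (∑ j, v j * u j) = 1 := by
        rw [← hsum_uv]; exact Finset.sum_congr rfl fun j _ => mul_comm _ _
      have hvz : (∑ j, v j * z j) = c := hc.symm
      rw [hvu, hvz] at h2
      linear_combination h2
    have hx_eq2 : ∀ j, x j = u j * Vx := by
      intro j
      rw [hx_eq j, hWx]; ring
    have hVx : Vx = 0 := by
      have h3 : Wx = (∑ k, w k * u k) * Vx := by
        rw [Finset.sum_mul, hWxd]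
        exact Finset.sum_congr rfl fun k _ => by rw [hx_eq2 k]; ring
      rw [hWx] at h3
      rcases mul_eq_zero.mp h3.symm with h | h
      · exact absurd h hwu
      · exact h
    funext j
    rw [Pi.zero_apply, hx_eq2 j, hVx, mul_zero]
  have hinj : Function.Injective M.mulVec := by
    intro a b hab
    have := hkey (a - b) (by rw [Matrix.mulVec_sub, hab, sub_self])
    exact sub_eq_zero.mp this
  have hMunit : IsUnit M := Matrix.mulVec_injective_iff_isUnit.mp hinj
  have hdet : IsUnit (M.transpose).det := by
    rw [Matrix.det_transpose]
    exact (Matrix.isUnit_iff_isUnit_det M).mp hMunit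
  -- inverse transpose sends w to v
  have hw' : (M.transpose)⁻¹.mulVec w = v := by
    have h1 : M.transpose.mulVec v = w := by
      funext k
      rw [Matrix.mulVec_transpose, hvecMul v k]
      have hvu : (∑ j, u j * v j) = 1 := hsum_uv
      have hvz : (∑ j, z j * v j) = c := by
        rw [hc]; exact Finset.sum_congr rfl fun j _ => mul_comm _ _
      rw [hvu, hvz]
      ring
    calc (M.transpose)⁻¹.mulVec w = (M.transpose)⁻¹.mulVec (M.transpose.mulVec v) := by rw [h1]
      _ = ((M.transpose)⁻¹ * M.transpose).mulVec v := by rw [← Matrix.mulVec_mulVec]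
      _ = v := by rw [Matrix.nonsing_inv_mul _ hdet, Matrix.one_mulVec]
  refine ⟨M, hMunit, ?_, ?_⟩
  · rw [hz', hw']
    exact hsum_uv
  · intro j k
    rw [hz', hw', huv j, huv k]
    intro h
    have h2 : (2 : ℂ) * (n : ℂ)⁻¹ = 0 := by linear_combination h
    rcases mul_eq_zero.mp h2 with h | h
    · norm_num at h
    · exact inv_ne_zero hn0 h
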